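/- Let q = 2^m with m ≥ 2, let c ∈ GF(q^2)* with c^{q+1} ≠ 1, and let e be an integer with 1 ≤ e ≤ q. If a_0 + a_1 u + ... + a_q u^q is the polynomial expansion over U_{q+1} of the function u ↦ ((u + c^q)/(cu + 1))^e, then a_0 = 0 and a_1 = c^{q(e-1)}. -/

import Mathlib

open Polynomial Finset

lemma aux_nthRoots_image {F : Type*} [Field F] [DecidableEq F] {n : ℕ} (hn : 0 < n) {ζ : F}
    (hζ : IsPrimitiveRoot ζ n) :
    Polynomial.nthRootsFinset n (1 : F) = (Finset.range n).image (ζ ^ ·) := by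
  haveI : NeZero n := ⟨hn.ne'⟩
  ext x
  rw [Polynomial.mem_nthRootsFinset hn, Finset.mem_image]
  constructor
  · intro hx
    obtain ⟨i, hi, hix⟩ := hζ.eq_pow_of_pow_eq_one hx
    exact ⟨i, Finset.mem_range.mpr hi, hix⟩
  · rintro ⟨i, -, rfl⟩
    rw [← pow_mul, mul_comm, pow_mul, hζ.pow_eq_one, one_pow]

lemma aux_sum_pow_nthRoots {F : Type*} [Field F] [DecidableEq F] {n : ℕ} (hn : 0 < n) {ζ : F}
    (hζ : IsPrimitiveRoot ζ n) (j : ℕ) :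
    ∑ u ∈ Polynomial.nthRootsFinset n (1 : F), u ^ j = if n ∣ j then (n : F) else 0 := by
  rw [aux_nthRoots_image hn hζ, Finset.sum_image (by
    intro i hi k hk h
    exact hζ.injOn_pow (by simpa using hi) (by simpa using hk) h)]
  have key : ∀ i, (ζ ^ i) ^ j = (ζ ^ j) ^ i := fun i => by
    rw [← pow_mul, mul_comm, pow_mul]
  simp_rw [key]
  by_cases h : n ∣ j
  · have h1 : ζ ^ j = 1 := hζ.pow_eq_one_iff_dvd j |>.mpr h
    simp [h1, if_pos h]
  · have h1 : ζ ^ j ≠ 1 := fun hh => h ((hζ.pow_eq_one_iff_dvd j).mp hh)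
    rw [if_neg h, geom_sum_eq h1]
    have h2 : (ζ ^ j) ^ n = 1 := by rw [← pow_mul, mul_comm, pow_mul, hζ.pow_eq_one, one_pow]
    simp [h2]

theorem stmt3 (m q : ℕ) (hm : 2 ≤ m) (hq : q = 2 ^ m) (F : Type*) [Field F] [Fintype F]
    (hF : Fintype.card F = q ^ 2) (c : F) (hc0 : c ≠ 0) (hc : c ^ (q + 1) ≠ 1)
    (e : ℕ) (he1 : 1 ≤ e) (heq : e ≤ q) (a : ℕ → F)
    (ha : ∀ u : F, u ^ (q + 1) = 1 →
      ((u + c ^ q) / (c * u + 1)) ^ e = ∑ i ∈ Finset.range (q + 1), a i * u ^ i) :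
    a 0 = 0 ∧ a 1 = c ^ (q * (e - 1)) := by
  classical
  have hq4 : 4 ≤ q := by
    subst hq; calc 4 = 2 ^ 2 := rfl
    _ ≤ 2 ^ m := Nat.pow_le_pow_right (by norm_num) hm
  -- characteristic 2
  haveI : CharP F (ringChar F) := ringChar.charP F
  have hprime : (ringChar F).Prime := CharP.char_is_prime F _
  have hdvd : ringChar F ∣ q ^ 2 := by
    rw [← hF]
    exact (CharP.cast_eq_zero_iff F (ringChar F) _).mp (FiniteField.cast_card_eq_zero F)
  have hchar2 : ringChar F = 2 := by
    have : ringChar F ∣ 2 ^ (m * 2) := by rwa [hq, ← pow_mul] at hdvd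
    have h2 := hprime.dvd_of_dvd_pow this
    exact (Nat.prime_dvd_prime_iff_eq hprime Nat.prime_two).mp h2
  haveI hF2 : CharP F 2 := hchar2 ▸ ringChar.charP F
  have h2z : (2 : F) = 0 := by
    have := CharP.cast_eq_zero F 2; push_cast at this; exact this
  -- primitive root of unity of order q+1
  obtain ⟨g, hg⟩ := IsCyclic.exists_ofOrder_eq_natCard (α := Fˣ)
  have hcardu : Nat.card Fˣ = q ^ 2 - 1 := by
    rw [Nat.card_eq_fintype_card, Fintype.card_units, hF]
  have horder : orderOf (g ^ (q - 1)) = q + 1 := by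
    rw [orderOf_pow, hg, hcardu]
    have h1 : q ^ 2 - 1 = (q - 1) * (q + 1) := by
      obtain ⟨k, rfl⟩ : ∃ k, q = k + 1 := ⟨q - 1, by omega⟩
      have h2 : (k + 1) ^ 2 = k * (k + 2) + 1 := by ring
      have h3 : (k + 1 - 1) * (k + 1 + 1) = k * (k + 2) := by rw [Nat.add_sub_cancel]
      omega
    rw [Nat.gcd_eq_right (h1 ▸ Dvd.intro _ rfl), h1,
      Nat.mul_div_cancel_left _ (by omega)]
  have hζu : IsPrimitiveRoot ((g ^ (q - 1) : Fˣ) : F) (q + 1) := by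
    rw [IsPrimitiveRoot.coe_units_iff]
    exact horder ▸ IsPrimitiveRoot.orderOf _
  -- the set of (q+1)-th roots of unity
  set U := Polynomial.nthRootsFinset (q + 1) (1 : F) with hUdef
  have hmemU : ∀ x : F, x ∈ U ↔ x ^ (q + 1) = 1 :=
    fun x => Polynomial.mem_nthRootsFinset (by omega) 1
  have hq1F : ((q + 1 : ℕ) : F) = 1 := by
    subst hq; push_cast; rw [h2z, zero_pow (by omega), zero_add]
  have hsum : ∀ j, ∑ u ∈ U, u ^ j = if (q + 1) ∣ j then (1 : F) else 0 := by
    intro j; rw [hUdef, aux_sum_pow_nthRoots (by omega) hζu j, hq1F]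
  -- basic field facts
  set b := c ^ q with hb
  have hcq2 : c ^ (q ^ 2) = c := by rw [← hF]; exact FiniteField.pow_card c
  have hbq1 : b ^ (q + 1) = c ^ (q + 1) := by
    rw [hb, ← pow_mul, show q * (q + 1) = q ^ 2 + q by ring, pow_add, hcq2, ← pow_succ']
  have hc1 : (1 : F) + c ^ (q + 1) ≠ 0 := by
    intro h
    apply hc
    have : c ^ (q + 1) = -1 := by linear_combination h
    rw [this, neg_eq_iff_add_eq_zero]
    linear_combination h2z
  have hu0 : ∀ u : F, u ^ (q + 1) = 1 → u ≠ 0 := by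
    intro u hu h; rw [h, zero_pow (by omega)] at hu; exact zero_ne_one hu
  have hden : ∀ u : F, u ^ (q + 1) = 1 → c * u + 1 ≠ 0 := by
    intro u hu h
    apply hc
    have hcu : c * u = 1 := by linear_combination h - h2z
    calc c ^ (q + 1) = c ^ (q + 1) * u ^ (q + 1) := by rw [hu, mul_one]
    _ = (c * u) ^ (q + 1) := by rw [mul_pow]
    _ = 1 := by rw [hcu, one_pow]
  have hnum : ∀ v : F, v ^ (q + 1) = 1 → v + b ≠ 0 := by
    intro v hv h
    apply hc
    have hvb : v = b := by linear_combination h - b * h2z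
    rw [← hbq1, ← hvb, hv]
  have hfrob : ∀ x y : F, (x + y) ^ q = x ^ q + y ^ q := by
    intro x y; rw [hq]; haveI : Fact (Nat.Prime 2) := ⟨Nat.prime_two⟩
    exact add_pow_char_pow x y 2 m
  -- the Möbius map φ
  set φ : F → F := fun u => (u + b) / (c * u + 1) with hφ
  have hφ0 : ∀ u : F, u ^ (q + 1) = 1 → φ u ≠ 0 := by
    intro u hu
    exact div_ne_zero (hnum u hu) (hden u hu)
  have huinv : ∀ u : F, u ^ (q + 1) = 1 → u ^ q = u⁻¹ := by
    intro u hu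
    exact eq_inv_of_mul_eq_one_right (by rw [← pow_succ']; exact hu)
  have hbq : b ^ q = c := by
    rw [hb, ← pow_mul, show q * q = q ^ 2 by ring, hcq2]
  have hφq : ∀ u : F, u ^ (q + 1) = 1 → (φ u) ^ q = (φ u)⁻¹ := by
    intro u hu
    show ((u + b) / (c * u + 1)) ^ q = ((u + b) / (c * u + 1))⁻¹
    rw [div_pow, hfrob u b, hfrob (c * u) 1, mul_pow, one_pow, hbq, huinv u hu, inv_div]
    rw [div_eq_div_iff (by
        intro h
        apply hnum u hu
        calc u + b = (c ^ q * u⁻¹ + 1) * u := by field_simp [hu0 u hu]; ring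
        _ = 0 := by rw [h, zero_mul]) (hnum u hu)]
    field_simp [hu0 u hu]
    ring
  have hφmem : ∀ u : F, u ^ (q + 1) = 1 → (φ u) ^ (q + 1) = 1 := by
    intro u hu
    rw [pow_succ, hφq u hu, inv_mul_cancel₀ (hφ0 u hu)]
  have hφφ : ∀ u : F, u ^ (q + 1) = 1 → φ (φ u) = u := by
    intro u hu
    have h1 := hden u hu
    have h2 := hden (φ u) (hφmem u hu)
    show (φ u + b) / (c * φ u + 1) = u
    rw [div_eq_iff h2]
    show ((u + b) / (c * u + 1) + b) = u * (c * ((u + b) / (c * u + 1)) + 1)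
    have hw : (u + b) / (c * u + 1) * (c * u + 1) = u + b := div_mul_cancel₀ _ h1
    linear_combination hw + (b - c * u * ((u + b) / (c * u + 1))) * h2z
  -- extraction of coefficients
  have hA0 : ∑ u ∈ U, (φ u) ^ e = a 0 := by
    rw [Finset.sum_congr rfl (fun u hu => ha u ((hmemU u).mp hu)), Finset.sum_comm]
    have h2 : ∀ i ∈ Finset.range (q + 1), ∑ u ∈ U, a i * u ^ i
        = if i = 0 then a 0 else 0 := by
      intro i hi
      rw [← Finset.mul_sum, hsum i]
      rcases eq_or_ne i 0 with rfl | h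
      · simp
      · rw [if_neg (fun hdd => absurd (Nat.le_of_dvd (Nat.pos_of_ne_zero h) hdd)
          (by rw [Finset.mem_range] at hi; omega)), mul_zero, if_neg h]
    rw [Finset.sum_congr rfl h2, Finset.sum_ite_eq' (Finset.range (q + 1)) 0 (fun _ => a 0),
      if_pos (Finset.mem_range.mpr (by omega))]
  have hA1 : ∑ u ∈ U, (φ u) ^ e * u ^ q = a 1 := by
    have h1 : ∀ u ∈ U, (φ u) ^ e * u ^ q = ∑ i ∈ Finset.range (q + 1), a i * u ^ (i + q) := by
      intro u hu
      rw [ha u ((hmemU u).mp hu), Finset.sum_mul]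
      exact Finset.sum_congr rfl fun i _ => by rw [pow_add, mul_assoc]
    rw [Finset.sum_congr rfl h1, Finset.sum_comm]
    have h2 : ∀ i ∈ Finset.range (q + 1), ∑ u ∈ U, a i * u ^ (i + q)
        = if i = 1 then a 1 else 0 := by
      intro i hi
      rw [Finset.mem_range] at hi
      rw [← Finset.mul_sum, hsum (i + q)]
      rcases eq_or_ne i 1 with rfl | h
      · rw [if_pos ⟨1, by omega⟩, mul_one, if_pos rfl]
      · rw [if_neg, mul_zero, if_neg h]
        rintro ⟨t, ht⟩
        rcases t with _ | _ | t
        · omega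
        · omega
        · have h6 : (q + 1) * 2 ≤ (q + 1) * (t + 2) := Nat.mul_le_mul_left _ (by omega)
          rw [← ht] at h6
          omega
    rw [Finset.sum_congr rfl h2, Finset.sum_ite_eq' (Finset.range (q + 1)) 1 (fun _ => a 1),
      if_pos (Finset.mem_range.mpr (by omega))]
  -- change of variables via φ
  have hT0 : ∑ u ∈ U, (φ u) ^ e = ∑ v ∈ U, v ^ e := by
    apply Finset.sum_nbij' φ φ
    · intro u hu; exact (hmemU _).mpr (hφmem u ((hmemU u).mp hu))
    · intro u hu; exact (hmemU _).mpr (hφmem u ((hmemU u).mp hu))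
    · intro u hu; exact hφφ u ((hmemU u).mp hu)
    · intro u hu; exact hφφ u ((hmemU u).mp hu)
    · intro u hu; rfl
  have hT1 : ∑ u ∈ U, (φ u) ^ e * u ^ q
      = ∑ v ∈ U, v ^ e * ((c * v + 1) / (v + b)) := by
    apply Finset.sum_nbij' φ φ
    · intro u hu; exact (hmemU _).mpr (hφmem u ((hmemU u).mp hu))
    · intro u hu; exact (hmemU _).mpr (hφmem u ((hmemU u).mp hu))
    · intro u hu; exact hφφ u ((hmemU u).mp hu)
    · intro u hu; exact hφφ u ((hmemU u).mp hu)
    · intro u hu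
      have hu' := (hmemU u).mp hu
      congr 1
      have hinv : (φ (φ u))⁻¹ = (c * φ u + 1) / (φ u + b) := by
        rw [show φ (φ u) = (φ u + b) / (c * φ u + 1) from rfl, inv_div]
      rw [hφφ u hu'] at hinv
      rw [huinv u hu', hinv]
  -- sum of e-th powers vanishes
  have hzero : ∑ v ∈ U, v ^ e = 0 := by
    rw [hsum e, if_neg (fun hdd => absurd (Nat.le_of_dvd (by omega) hdd) (by omega))]
  -- geometric expansion of 1/(v+b)
  have hgeom : ∀ v : F, v ^ (q + 1) = 1 →
      (∑ k ∈ Finset.range (q + 1), v ^ k * b ^ (q - k)) * (v + b) = 1 + c ^ (q + 1) := by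
    intro v hv
    have h := geom_sum₂_mul v b (q + 1)
    simp only [Nat.add_sub_cancel] at h
    rw [hv, hbq1] at h
    linear_combination h + ((∑ k ∈ Finset.range (q + 1), v ^ k * b ^ (q - k)) * b
      - c ^ (q + 1)) * h2z
  have hfrac : ∀ v : F, v ^ (q + 1) = 1 → (c * v + 1) / (v + b)
      = (c * v + 1) * (∑ k ∈ Finset.range (q + 1), v ^ k * b ^ (q - k)) * (1 + c ^ (q + 1))⁻¹ := by
    intro v hv
    rw [div_eq_iff (hnum v hv)]
    field_simp
    linear_combination (c * v + 1) * hgeom v hv + (1 + c * c ^ q + c * v + c ^ 2 * c ^ q * v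
      - (c * c ^ q * v + c * v ^ 2 + c ^ q + v)
        * (∑ k ∈ Finset.range (q + 1), v ^ k * b ^ (q - k))) * h2z
  -- the main computation
  have hT2 : ∑ v ∈ U, v ^ e * ((c * v + 1) / (v + b)) = c ^ (q * (e - 1)) := by
    have h1 : ∀ v ∈ U, v ^ e * ((c * v + 1) / (v + b))
        = (∑ k ∈ Finset.range (q + 1), (c * v ^ (e + 1 + k) + v ^ (e + k)) * b ^ (q - k))
          * (1 + c ^ (q + 1))⁻¹ := by
      intro v hv
      rw [hfrac v ((hmemU v).mp hv)]
      rw [← mul_assoc, ← mul_assoc]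
      congr 1
      rw [Finset.mul_sum]
      refine Finset.sum_congr rfl fun k _ => by ring
    rw [Finset.sum_congr rfl h1, ← Finset.sum_mul, Finset.sum_comm]
    have h2 : ∀ k ∈ Finset.range (q + 1),
        ∑ v ∈ U, (c * v ^ (e + 1 + k) + v ^ (e + k)) * b ^ (q - k)
        = (if k = q - e then c * b ^ e else 0) + (if k = q + 1 - e then b ^ (e - 1) else 0) := by
      intro k hk
      rw [Finset.mem_range] at hk
      have hd1 : ((q + 1) ∣ (e + 1 + k)) ↔ k = q - e := by
        constructor
        · rintro ⟨t, ht⟩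
          rcases t with _ | _ | t
          · omega
          · omega
          · have h6 : (q + 1) * 2 ≤ (q + 1) * (t + 2) := Nat.mul_le_mul_left _ (by omega)
            rw [← ht] at h6
            omega
        · rintro rfl; exact ⟨1, by omega⟩
      have hd2 : ((q + 1) ∣ (e + k)) ↔ k = q + 1 - e := by
        constructor
        · rintro ⟨t, ht⟩
          rcases t with _ | _ | t
          · omega
          · omega
          · have h6 : (q + 1) * 2 ≤ (q + 1) * (t + 2) := Nat.mul_le_mul_left _ (by omega)
            rw [← ht] at h6
            omega
        · rintro rfl; exact ⟨1, by omega⟩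
      have hsplit : ∑ v ∈ U, (c * v ^ (e + 1 + k) + v ^ (e + k)) * b ^ (q - k)
          = (c * (∑ v ∈ U, v ^ (e + 1 + k)) + ∑ v ∈ U, v ^ (e + k)) * b ^ (q - k) := by
        rw [← Finset.sum_mul, Finset.sum_add_distrib, ← Finset.mul_sum]
      rw [hsplit, hsum, hsum]
      rcases eq_or_ne k (q - e) with rfl | hk1
      · rw [if_pos (hd1.mpr rfl), if_neg (by rw [hd2]; omega), if_pos rfl, if_neg (by omega)]
        simp only [mul_one, add_zero]
        rw [show q - (q - e) = e by omega]
      · rcases eq_or_ne k (q + 1 - e) with rfl | hk2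
        · rw [if_neg (by rw [hd1]; omega), if_pos (hd2.mpr rfl), if_neg (by omega), if_pos rfl]
          simp only [mul_zero, zero_add, one_mul]
          rw [show q - (q + 1 - e) = e - 1 by omega]
        · rw [if_neg (by rw [hd1]; omega), if_neg (by rw [hd2]; omega), if_neg hk1, if_neg hk2]
          simp
    rw [Finset.sum_congr rfl h2, Finset.sum_add_distrib,
      Finset.sum_ite_eq' (Finset.range (q + 1)) (q - e) (fun _ => c * b ^ e),
      Finset.sum_ite_eq' (Finset.range (q + 1)) (q + 1 - e) (fun _ => b ^ (e - 1)),
      if_pos (Finset.mem_range.mpr (by omega)), if_pos (Finset.mem_range.mpr (by omega))]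
    have hfact : c * b ^ e + b ^ (e - 1) = b ^ (e - 1) * (1 + c ^ (q + 1)) := by
      obtain ⟨e', rfl⟩ : ∃ e', e = e' + 1 := ⟨e - 1, by omega⟩
      rw [Nat.add_sub_cancel, pow_succ, hb, ← pow_succ]
      ring
    rw [hfact, mul_assoc, mul_inv_cancel₀ hc1, mul_one, hb, ← pow_mul]
  exact ⟨by rw [← hA0, hT0, hzero], by rw [← hA1, hT1, hT2]⟩
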